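/- Let $\iota$ be a finite type with $n = |\iota| \geq 2$ elements, and let $f$ be a function from subsets of $\iota$ to the nonnegative reals that is subadditive on disjoint nonempty sets: $f(X \cup Y) \leq f(X) + f(Y)$ whenever $X, Y$ are disjoint nonempty subsets of $\iota$. Then $(2^{n-1}-1)\, f(\iota) \;\leq\; \sum_{\emptyset \neq X \subsetneq \iota} f(X) \;\leq\; (2^{n-1}-1) \sum_{j \in \iota} f(\{j\})$, where the middle sum runs over all nonempty proper subsets $X$ of $\iota$. (Strong non-monogamy inequality.) -/

import Mathlib

/-- **Strong non-monogamy inequality.** For `f` nonnegative on subsets of a finite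
type `ι` with `n = |ι| ≥ 2` elements, subadditive on disjoint nonempty sets,
`(2^(n-1) - 1) f(ι) ≤ ∑_{∅ ≠ X ⊊ ι} f(X) ≤ (2^(n-1) - 1) ∑_j f({j})`. -/
theorem strong_nonmonogamy
    {ι : Type*} [Fintype ι] [DecidableEq ι]
    (hn : 2 ≤ Fintype.card ι)
    (f : Finset ι → ℝ) (hf0 : ∀ X, 0 ≤ f X)
    (hsub : ∀ X Y : Finset ι, Disjoint X Y → X.Nonempty → Y.Nonempty →
      f (X ∪ Y) ≤ f X + f Y) :
    (((2 : ℝ) ^ (Fintype.card ι - 1) - 1) * f Finset.univ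
      ≤ ∑ X ∈ Finset.univ.powerset.filter
          (fun X : Finset ι => X.Nonempty ∧ X ≠ Finset.univ), f X)
    ∧ (∑ X ∈ Finset.univ.powerset.filter
          (fun X : Finset ι => X.Nonempty ∧ X ≠ Finset.univ), f X
      ≤ ((2 : ℝ) ^ (Fintype.card ι - 1) - 1) * ∑ j, f {j}) := by
  classical
  set n := Fintype.card ι with hn'
  set S := Finset.univ.powerset.filter
      (fun X : Finset ι => X.Nonempty ∧ X ≠ Finset.univ) with hS
  have hmemS : ∀ X : Finset ι, X ∈ S ↔ X.Nonempty ∧ X ≠ Finset.univ := by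
    intro X; simp [hS]
  -- cardinality of S
  have hScard : S.card = 2 ^ n - 2 := by
    have h1 : S = ((Finset.univ.powerset.erase (Finset.univ : Finset ι)).erase ∅) := by
      ext X
      simp only [hmemS, Finset.mem_erase, Finset.mem_powerset, Finset.subset_univ,
        and_true, Finset.nonempty_iff_ne_empty]
    rw [h1]
    have hne : (∅ : Finset ι) ≠ Finset.univ := by
      intro h
      have := Finset.card_univ (α := ι)
      rw [← h] at this
      simp at this; omega
    rw [Finset.card_erase_of_mem, Finset.card_erase_of_mem]
    · rw [Finset.card_powerset, Finset.card_univ, ← hn']; omega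
    · simp
    · simp [Finset.mem_erase, hne]
  -- powers
  have hpow2 : (2:ℝ) ^ n = 2 ^ (n-1) * 2 := by
    rw [← pow_succ]; congr 1; omega
  have hpowge : (2:ℕ) ≤ 2 ^ n := by
    calc (2:ℕ) = 2^1 := rfl
    _ ≤ 2^n := Nat.pow_le_pow_right (by norm_num) (by omega)
  have hpowge1 : (1:ℕ) ≤ 2 ^ (n-1) := Nat.one_le_two_pow
  constructor
  · -- lower bound: pair X with Xᶜ
    have hkey : ∀ X ∈ S, f Finset.univ ≤ f X + f Xᶜ := by
      intro X hX
      rw [hmemS] at hX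
      have hXc : (Xᶜ : Finset ι).Nonempty := by
        rw [Finset.nonempty_iff_ne_empty]
        simpa using hX.2
      have := hsub X Xᶜ disjoint_compl_right hX.1 hXc
      rwa [Finset.union_compl] at this
    have hswap : ∑ X ∈ S, f Xᶜ = ∑ X ∈ S, f X := by
      apply Finset.sum_nbij' (fun X => Xᶜ) (fun X => Xᶜ) <;>
        intro X hX <;> simp_all [hmemS, Finset.nonempty_iff_ne_empty]
    have h2 : (S.card : ℝ) * f Finset.univ ≤ 2 * ∑ X ∈ S, f X := by
      have hsc : ∑ _X ∈ S, f Finset.univ = (S.card : ℝ) * f Finset.univ := by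
        rw [Finset.sum_const, nsmul_eq_mul]
      rw [← hsc]
      calc ∑ X ∈ S, f Finset.univ ≤ ∑ X ∈ S, (f X + f Xᶜ) :=
            Finset.sum_le_sum hkey
        _ = ∑ X ∈ S, f X + ∑ X ∈ S, f Xᶜ := Finset.sum_add_distrib
        _ = 2 * ∑ X ∈ S, f X := by rw [hswap]; ring
    have hcast : (S.card : ℝ) = 2 ^ n - 2 := by
      rw [hScard, Nat.cast_sub hpowge]; push_cast; ring
    rw [hcast] at h2
    nlinarith [hf0 Finset.univ]
  · -- upper bound
    have hsingle : ∀ X : Finset ι, X.Nonempty → f X ≤ ∑ j ∈ X, f {j} := by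
      intro X hX
      induction hX using Finset.Nonempty.cons_induction with
      | singleton j => simp
      | cons j Y hj hY ih =>
        rw [Finset.cons_eq_insert, Finset.sum_insert hj]
        have : f (insert j Y) ≤ f {j} + f Y := by
          have := hsub {j} Y (by simpa using hj) (Finset.singleton_nonempty j) hY
          rwa [show ({j} : Finset ι) ∪ Y = insert j Y from by ext; simp] at this
        linarith
    have hcount : ∀ j : ι, (S.filter (fun X => j ∈ X)).card = 2 ^ (n-1) - 1 := by
      intro j
      have hbij : (S.filter (fun X => j ∈ X)).card =
          ((Finset.univ.erase j).powerset.erase (Finset.univ.erase j)).card := by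
        apply Finset.card_nbij' (fun X => X.erase j) (fun Y => insert j Y)
        · intro X hX
          simp only [Finset.mem_coe, Finset.mem_filter, hmemS] at hX
          obtain ⟨⟨hXne, hXuniv⟩, hjX⟩ := hX
          simp only [Finset.mem_coe, Finset.mem_erase, Finset.mem_powerset]
          refine ⟨?_, Finset.erase_subset_erase j (Finset.subset_univ X)⟩
          intro h
          apply hXuniv
          have := congrArg (insert j) h
          rwa [Finset.insert_erase hjX, Finset.insert_erase (Finset.mem_univ j)] at this
        · intro Y hY
          simp only [Finset.mem_coe, Finset.mem_erase, Finset.mem_powerset] at hY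
          obtain ⟨hYne, hYsub⟩ := hY
          have hjY : j ∉ Y := fun h => (Finset.mem_erase.mp (hYsub h)).1 rfl
          simp only [Finset.mem_coe, Finset.mem_filter, hmemS]
          refine ⟨⟨⟨j, Finset.mem_insert_self j Y⟩, ?_⟩, Finset.mem_insert_self j Y⟩
          intro h
          apply hYne
          have := congrArg (Finset.erase · j) h
          simpa [Finset.erase_insert hjY] using this
        · intro X hX
          simp only [Finset.mem_coe, Finset.mem_filter] at hX
          exact Finset.insert_erase hX.2
        · intro Y hY
          simp only [Finset.mem_coe, Finset.mem_erase, Finset.mem_powerset] at hY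
          have hjY : j ∉ Y := fun h => (Finset.mem_erase.mp (hY.2 h)).1 rfl
          exact Finset.erase_insert hjY
      rw [hbij, Finset.card_erase_of_mem (Finset.mem_powerset_self _),
        Finset.card_powerset, Finset.card_erase_of_mem (Finset.mem_univ j),
        Finset.card_univ, ← hn']
    calc ∑ X ∈ S, f X ≤ ∑ X ∈ S, ∑ j ∈ X, f {j} := by
          apply Finset.sum_le_sum
          intro X hX
          exact hsingle X ((hmemS X).mp hX).1
      _ = ∑ X ∈ S, ∑ j : ι, if j ∈ X then f {j} else 0 := by
          apply Finset.sum_congr rfl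
          intro X _
          rw [← Finset.sum_filter]
          congr 1
          ext j; simp
      _ = ∑ j : ι, ∑ X ∈ S, if j ∈ X then f {j} else 0 := Finset.sum_comm
      _ = ∑ j : ι, ((2:ℝ) ^ (n-1) - 1) * f {j} := by
          apply Finset.sum_congr rfl
          intro j _
          rw [← Finset.sum_filter, Finset.sum_const, hcount j, nsmul_eq_mul,
            Nat.cast_sub hpowge1]
          push_cast; ring
      _ = ((2:ℝ) ^ (n-1) - 1) * ∑ j, f {j} := by rw [Finset.mul_sum]
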